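/- For real y, z with 0 ≤ y < 1, 0 ≤ z < 1: ∑_{(a,b): gcd(a,b)=1, a ≥ 0, b ≥ 1} (1/b) · log(1 - y^a z^b) = (1/(1-y)) · log(1 - z). Equivalently, ∏_{gcd(a,b)=1, a≥0, b>0} (1 - y^a z^b)^{1/b} = (1-z)^{1/(1-y)}. -/

import Mathlib

set_option maxHeartbeats 1000000

open Real

namespace Stmt13Aux

/-- The bijection between coprime pairs times a multiplier and all pairs `(A, B)` with `B ≥ 1`. -/
def e : {p : ℕ × ℕ+ // Nat.gcd p.1 (p.2 : ℕ) = 1} × ℕ+ ≃ ℕ × ℕ+ where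
  toFun x := (x.1.val.1 * (x.2 : ℕ), x.1.val.2 * x.2)
  invFun q :=
    (⟨(q.1 / Nat.gcd q.1 (q.2 : ℕ),
        ⟨(q.2 : ℕ) / Nat.gcd q.1 (q.2 : ℕ),
          Nat.div_pos (Nat.le_of_dvd q.2.pos (Nat.gcd_dvd_right _ _))
            (Nat.gcd_pos_of_pos_right _ q.2.pos)⟩),
        Nat.coprime_div_gcd_div_gcd (Nat.gcd_pos_of_pos_right _ q.2.pos)⟩,
      ⟨Nat.gcd q.1 (q.2 : ℕ), Nat.gcd_pos_of_pos_right _ q.2.pos⟩)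
  left_inv := by
    rintro ⟨⟨⟨a, b⟩, h⟩, k⟩
    have hg : Nat.gcd (a * (k : ℕ)) (((b * k : ℕ+) : ℕ)) = (k : ℕ) := by
      rw [PNat.mul_coe, Nat.gcd_mul_right, h, one_mul]
    refine Prod.ext (Subtype.ext (Prod.ext ?_ (PNat.coe_injective ?_))) (PNat.coe_injective ?_)
    · show a * (k : ℕ) / Nat.gcd (a * (k : ℕ)) (((b * k : ℕ+) : ℕ)) = a
      rw [hg, Nat.mul_div_cancel _ k.pos]
    · show ((b * k : ℕ+) : ℕ) / Nat.gcd (a * (k : ℕ)) (((b * k : ℕ+) : ℕ)) = (b : ℕ)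
      rw [hg, PNat.mul_coe, Nat.mul_div_cancel _ k.pos]
    · exact hg
  right_inv := by
    rintro ⟨A, B⟩
    refine Prod.ext ?_ (PNat.coe_injective ?_)
    · show A / Nat.gcd A (B : ℕ) * Nat.gcd A (B : ℕ) = A
      exact Nat.div_mul_cancel (Nat.gcd_dvd_left _ _)
    · show (B : ℕ) / Nat.gcd A (B : ℕ) * Nat.gcd A (B : ℕ) = (B : ℕ)
      exact Nat.div_mul_cancel (Nat.gcd_dvd_right _ _)

lemma hasSum_pnat_log {x : ℝ} (hx0 : 0 ≤ x) (hx1 : x < 1) (c : ℝ) :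
    HasSum (fun k : ℕ+ => -(c * (x ^ (k : ℕ) / (k : ℕ)))) (c * Real.log (1 - x)) := by
  have habs : |x| < 1 := by rwa [abs_of_nonneg hx0]
  have h := (hasSum_pow_div_log_of_abs_lt_one habs).mul_left (-c)
  rw [mul_neg, neg_mul, neg_neg] at h
  refine (Equiv.pnatEquivNat.symm.hasSum_iff).mp ?_
  convert h using 1
  · rfl
  funext n
  simp only [Function.comp_apply, Equiv.pnatEquivNat_symm_apply, Nat.succPNat_coe]
  push_cast
  rw [pow_succ]
  ring

end Stmt13Aux

theorem stmt_13 (y z : ℝ) (hy0 : 0 ≤ y) (hy1 : y < 1) (hz0 : 0 ≤ z) (hz1 : z < 1) :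
    (∑' p : {p : ℕ × ℕ+ // Nat.gcd p.1 (p.2 : ℕ) = 1},
        (1 / (p.val.2 : ℝ)) * Real.log (1 - y ^ p.val.1 * z ^ (p.val.2 : ℕ)) =
      1 / (1 - y) * Real.log (1 - z)) ∧
    (∏' p : {p : ℕ × ℕ+ // Nat.gcd p.1 (p.2 : ℕ) = 1},
        (1 - y ^ p.val.1 * z ^ (p.val.2 : ℕ)) ^ ((1 : ℝ) / (p.val.2 : ℝ)) =
      (1 - z) ^ (1 / (1 - y))) := by
  set S := {p : ℕ × ℕ+ // Nat.gcd p.1 (p.2 : ℕ) = 1}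
  set f : S → ℝ := fun p => (1 / (p.val.2 : ℝ)) * Real.log (1 - y ^ p.val.1 * z ^ (p.val.2 : ℕ))
    with hf_def
  -- bounds on the base
  have hx0 : ∀ p : S, 0 ≤ y ^ p.val.1 * z ^ (p.val.2 : ℕ) :=
    fun p => mul_nonneg (pow_nonneg hy0 _) (pow_nonneg hz0 _)
  have hx1 : ∀ p : S, y ^ p.val.1 * z ^ (p.val.2 : ℕ) < 1 := by
    intro p
    calc y ^ p.val.1 * z ^ (p.val.2 : ℕ) ≤ 1 * z ^ (p.val.2 : ℕ) := by
          gcongr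
          exact pow_le_one₀ hy0 hy1.le
      _ = z ^ (p.val.2 : ℕ) := one_mul _
      _ < 1 := pow_lt_one₀ hz0 hz1 p.val.2.pos.ne'
  -- the sum over all pairs (A, B), B ≥ 1
  set g : ℕ × ℕ+ → ℝ := fun q => y ^ q.1 * (-(z ^ (q.2 : ℕ) / ((q.2 : ℕ) : ℝ))) with hg_def
  have hu : HasSum (fun A : ℕ => y ^ A) (1 / (1 - y)) := by
    rw [one_div]
    exact hasSum_geometric_of_lt_one hy0 hy1
  have hv : HasSum (fun B : ℕ+ => -(z ^ (B : ℕ) / ((B : ℕ) : ℝ))) (Real.log (1 - z)) := by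
    have := Stmt13Aux.hasSum_pnat_log hz0 hz1 1
    simpa using this
  have hsummable : Summable g := by
    have hw : Summable (fun B : ℕ+ => z ^ (B : ℕ) / ((B : ℕ) : ℝ)) := by
      have := hv.summable.neg
      simpa using this
    have h1 : Summable (fun q : ℕ × ℕ+ => y ^ q.1 * (z ^ (q.2 : ℕ) / ((q.2 : ℕ) : ℝ))) :=
      Summable.mul_of_nonneg hu.summable hw (fun A => pow_nonneg hy0 _)
        (fun B => div_nonneg (pow_nonneg hz0 _) (by positivity))
    have := h1.neg
    apply this.congr
    intro q
    simp [hg_def, mul_neg]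
  have hG : HasSum g (1 / (1 - y) * Real.log (1 - z)) := hu.mul hv hsummable
  have hGE : HasSum (g ∘ Stmt13Aux.e) (1 / (1 - y) * Real.log (1 - z)) :=
    (Stmt13Aux.e.hasSum_iff).mpr hG
  -- fiberwise sums
  have hfib : ∀ p : S, HasSum (fun k : ℕ+ => (g ∘ Stmt13Aux.e) (p, k)) (f p) := by
    intro p
    obtain ⟨⟨a, b⟩, hp⟩ := p
    have key := Stmt13Aux.hasSum_pnat_log (x := y ^ a * z ^ (b : ℕ))
      (hx0 ⟨(a, b), hp⟩) (hx1 ⟨(a, b), hp⟩) (1 / ((b : ℕ) : ℝ))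
    convert key using 1
    funext k
    simp only [Function.comp_apply, Stmt13Aux.e, Equiv.coe_fn_mk, hg_def, PNat.mul_coe]
    have hb : ((b : ℕ) : ℝ) ≠ 0 := by positivity
    have hk : ((k : ℕ) : ℝ) ≠ 0 := by positivity
    rw [mul_pow, ← pow_mul, ← pow_mul]
    push_cast
    field_simp
  have hF : HasSum f (1 / (1 - y) * Real.log (1 - z)) := hGE.prod_fiberwise hfib
  refine ⟨hF.tsum_eq, ?_⟩
  -- product part
  have hfactor : ∀ p : S,
      (1 - y ^ p.val.1 * z ^ (p.val.2 : ℕ)) ^ ((1 : ℝ) / (p.val.2 : ℝ)) = Real.exp (f p) := by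
    intro p
    rw [Real.rpow_def_of_pos (by linarith [hx1 p]), hf_def]
    ring_nf
  have hP : HasProd (fun p : S => Real.exp (f p)) (Real.exp (1 / (1 - y) * Real.log (1 - z))) :=
    hF.rexp
  calc (∏' p : S, (1 - y ^ p.val.1 * z ^ (p.val.2 : ℕ)) ^ ((1 : ℝ) / (p.val.2 : ℝ)))
      = ∏' p : S, Real.exp (f p) := by
        exact tprod_congr hfactor
    _ = Real.exp (1 / (1 - y) * Real.log (1 - z)) := hP.tprod_eq
    _ = (1 - z) ^ (1 / (1 - y)) := by
        rw [Real.rpow_def_of_pos (by linarith), mul_comm]
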